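/- Let G be a finite group and π_k (k = 1, 2, ...) a sequence of finite-dimensional complex representations of G. Let S be the set of irreducible representations of G, and suppose that for some constant c ≥ 0: (i) for every ρ ∈ S, liminf_{k→∞} ⟨ρ, π_k⟩/k ≥ c·dim(ρ), and (ii) lim_{k→∞} (dim π_k)/k = c·∑_{ρ∈S} (dim ρ)². Then for every ρ ∈ S, lim_{k→∞} ⟨ρ, π_k⟩/k = c·dim(ρ). -/

import Mathlib

open Module Filter Topology

/-- The submodule of `G`-equivariant linear maps between two representations. -/
def eqHoms {G : Type*} [Group G] {V W : Type*} [AddCommGroup V] [Module ℂ V]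
    [AddCommGroup W] [Module ℂ W]
    (ρ : Representation ℂ G V) (π : Representation ℂ G W) : Submodule ℂ (V →ₗ[ℂ] W) where
  carrier := {f | ∀ g, f ∘ₗ ρ g = π g ∘ₗ f}
  add_mem' := by
    intro f h hf hh g
    ext v
    have h1 := LinearMap.congr_fun (hf g) v
    have h2 := LinearMap.congr_fun (hh g) v
    simp only [LinearMap.comp_apply] at h1 h2 ⊢
    simp [h1, h2]
  zero_mem' := by intro g; ext v; simp
  smul_mem' := by
    intro c f hf g
    ext v
    have h1 := LinearMap.congr_fun (hf g) v
    simp only [LinearMap.comp_apply] at h1 ⊢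
    simp [h1]

/-- The multiplicity of the irreducible representation `ρ` in `π`, i.e. the dimension of the
space of `G`-equivariant linear maps from `ρ` to `π`. -/
noncomputable def multRep {G : Type*} [Group G] {V W : Type*} [AddCommGroup V] [Module ℂ V]
    [AddCommGroup W] [Module ℂ W]
    (ρ : Representation ℂ G V) (π : Representation ℂ G W) : ℕ :=
  Module.finrank ℂ (eqHoms ρ π)

/-- A representation is irreducible if the space is nonzero and the only invariant submodules
are `⊥` and `⊤`. -/
def RepIsIrreducible {G : Type*} [Group G] {V : Type*} [AddCommGroup V] [Module ℂ V]
    (ρ : Representation ℂ G V) : Prop :=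
  Nontrivial V ∧ ∀ U : Submodule ℂ V, (∀ g, ∀ x ∈ U, ρ g x ∈ U) → U = ⊥ ∨ U = ⊤

/-- Two representations are isomorphic. -/
def RepIso {G : Type*} [Group G] {V W : Type*} [AddCommGroup V] [Module ℂ V]
    [AddCommGroup W] [Module ℂ W]
    (ρ : Representation ℂ G V) (π : Representation ℂ G W) : Prop :=
  ∃ e : V ≃ₗ[ℂ] W, ∀ g v, e (ρ g v) = π g (e v)

section RepTheory

variable {G : Type*} [Group G]
variable {V W : Type*} [AddCommGroup V] [Module ℂ V] [AddCommGroup W] [Module ℂ W]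

lemma mem_eqHoms {ρ : Representation ℂ G V} {π : Representation ℂ G W} {f : V →ₗ[ℂ] W} :
    f ∈ eqHoms ρ π ↔ ∀ g v, f (ρ g v) = π g (f v) := by
  constructor
  · intro h g v
    exact LinearMap.congr_fun (h g) v
  · intro h g
    ext v
    simpa using h g v

lemma RepIso.symm {ρ : Representation ℂ G V} {π : Representation ℂ G W} (h : RepIso ρ π) :
    RepIso π ρ := by
  obtain ⟨e, he⟩ := h
  refine ⟨e.symm, fun g w => e.injective ?_⟩
  rw [he, e.apply_symm_apply, e.apply_symm_apply]

lemma RepIso.trans {X : Type*} [AddCommGroup X] [Module ℂ X]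
    {ρ : Representation ℂ G V} {π : Representation ℂ G W} {τ : Representation ℂ G X}
    (h1 : RepIso ρ π) (h2 : RepIso π τ) : RepIso ρ τ := by
  obtain ⟨e, he⟩ := h1
  obtain ⟨f, hf⟩ := h2
  exact ⟨e.trans f, fun g v => by simp [he, hf]⟩

/-- The restriction of a representation to an invariant subspace. -/
def subRep (ρ : Representation ℂ G V) (U : Submodule ℂ V) (hU : ∀ g, ∀ x ∈ U, ρ g x ∈ U) :
    Representation ℂ G U where
  toFun g := (ρ g).restrict (hU g)
  map_one' := by ext x; simp [LinearMap.restrict_apply]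
  map_mul' g h := by ext x; simp [LinearMap.restrict_apply]

@[simp] lemma subRep_apply (ρ : Representation ℂ G V) (U : Submodule ℂ V)
    (hU : ∀ g, ∀ x ∈ U, ρ g x ∈ U) (g : G) (x : U) :
    (subRep ρ U hU g x : V) = ρ g x := rfl

/-- Maschke: every invariant subspace has an invariant complement. -/
lemma exists_invariant_isCompl [Fintype G] [FiniteDimensional ℂ V]
    (ρ : Representation ℂ G V) (U : Submodule ℂ V) (hU : ∀ g, ∀ x ∈ U, ρ g x ∈ U) :
    ∃ U' : Submodule ℂ V, (∀ g, ∀ x ∈ U', ρ g x ∈ U') ∧ IsCompl U U' := by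
  obtain ⟨U₀, h₀⟩ := Submodule.exists_isCompl U
  set q : V →ₗ[ℂ] V := U.subtype ∘ₗ U.linearProjOfIsCompl U₀ h₀ with hq
  have hq1 : ∀ u ∈ U, q u = u := by
    intro u hu
    rw [hq, LinearMap.comp_apply]
    exact congrArg Subtype.val (Submodule.linearProjOfIsCompl_apply_left h₀ ⟨u, hu⟩)
  have hq2 : ∀ x, q x ∈ U := fun x => (U.linearProjOfIsCompl U₀ h₀ x).2
  set P : V →ₗ[ℂ] V := ((Fintype.card G : ℂ)⁻¹) • ∑ g : G, ρ g ∘ₗ q ∘ₗ ρ g⁻¹ with hP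
  have hcard : (Fintype.card G : ℂ) ≠ 0 := by
    exact_mod_cast Nat.cast_ne_zero.2 Fintype.card_pos.ne'
  have hP1 : ∀ x, P x ∈ U := by
    intro x
    simp only [hP, LinearMap.smul_apply, LinearMap.sum_apply, LinearMap.comp_apply]
    exact U.smul_mem _ (Submodule.sum_mem _ fun g _ => hU g _ (hq2 _))
  have hP2 : ∀ u ∈ U, P u = u := by
    intro u hu
    have : ∀ g : G, (ρ g ∘ₗ q ∘ₗ ρ g⁻¹) u = u := by
      intro g
      simp only [LinearMap.comp_apply]
      rw [hq1 _ (hU g⁻¹ u hu), ← LinearMap.comp_apply, ← Module.End.mul_eq_comp, ← map_mul,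
        mul_inv_cancel, map_one, Module.End.one_apply]
    simp only [hP, LinearMap.smul_apply, LinearMap.sum_apply, this, Finset.sum_const,
      Finset.card_univ]
    rw [← Nat.cast_smul_eq_nsmul ℂ, smul_smul, inv_mul_cancel₀ hcard, one_smul]
  have hP3 : ∀ (g : G) (x : V), P (ρ g x) = ρ g (P x) := by
    intro h x
    simp only [hP, LinearMap.smul_apply, LinearMap.sum_apply, LinearMap.comp_apply]
    rw [map_smul, map_sum]
    congr 1
    refine (Fintype.sum_equiv (Equiv.mulLeft h)
      (fun g => ρ h ((ρ g ∘ₗ q ∘ₗ ρ g⁻¹) x)) _ (fun g => ?_)).symm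
    simp only [LinearMap.comp_apply, Equiv.coe_mulLeft]
    have e1 : ρ (h * g)⁻¹ (ρ h x) = ρ g⁻¹ x := by
      rw [← LinearMap.comp_apply, ← Module.End.mul_eq_comp, ← map_mul]
      congr 1
      group
    rw [e1, map_mul, Module.End.mul_apply]
  refine ⟨LinearMap.ker (P.codRestrict U hP1), ?_, ?_⟩
  · intro g x hx
    rw [LinearMap.ker_codRestrict, LinearMap.mem_ker] at hx ⊢
    rw [hP3, hx, map_zero]
  · exact LinearMap.isCompl_of_proj fun u => by
      ext; simp [LinearMap.codRestrict_apply, hP2 u u.2]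

end RepTheory

section RepTheory2

variable {G : Type*} [Group G]
variable {V W : Type*} [AddCommGroup V] [Module ℂ V] [AddCommGroup W] [Module ℂ W]

lemma multRep_zero_of_subsingleton (ρ : Representation ℂ G V) (π : Representation ℂ G W)
    [Subsingleton W] : multRep ρ π = 0 := by
  haveI : Subsingleton (V →ₗ[ℂ] W) :=
    ⟨fun f g => LinearMap.ext fun v => Subsingleton.elim _ _⟩
  exact Module.finrank_zero_of_subsingleton

lemma multRep_congr_right (ρ : Representation ℂ G V) {π : Representation ℂ G W}
    {W' : Type*} [AddCommGroup W'] [Module ℂ W'] {π' : Representation ℂ G W'}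
    (h : RepIso π π') : multRep ρ π = multRep ρ π' := by
  obtain ⟨e, he⟩ := h
  have he' : ∀ g w, e.symm (π' g w) = π g (e.symm w) := fun g w => e.injective (by
    rw [he, e.apply_symm_apply, e.apply_symm_apply])
  have E : (eqHoms ρ π) ≃ₗ[ℂ] (eqHoms ρ π') :=
    { toFun := fun f => ⟨e.toLinearMap ∘ₗ f.1, mem_eqHoms.2 fun g v => by
        simp only [LinearMap.comp_apply, LinearEquiv.coe_coe]
        rw [mem_eqHoms.1 f.2 g v, he]⟩
      map_add' := fun f g => by
        apply Subtype.ext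
        simp [LinearMap.comp_add]
      map_smul' := fun c f => by
        apply Subtype.ext
        simp [LinearMap.comp_smul]
      invFun := fun f => ⟨e.symm.toLinearMap ∘ₗ f.1, mem_eqHoms.2 fun g v => by
        simp only [LinearMap.comp_apply, LinearEquiv.coe_coe]
        rw [mem_eqHoms.1 f.2 g v, he']⟩
      left_inv := fun f => by
        apply Subtype.ext
        ext v
        simp
      right_inv := fun f => by
        apply Subtype.ext
        ext v
        simp }
  exact E.finrank_eq

/-- The submodule of equivariant maps whose range lies in `U`. -/
def eqHomsInto (ρ : Representation ℂ G V) (π : Representation ℂ G W) (U : Submodule ℂ W) :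
    Submodule ℂ (V →ₗ[ℂ] W) where
  carrier := {f | f ∈ eqHoms ρ π ∧ ∀ v, f v ∈ U}
  add_mem' := fun ha hb => ⟨(eqHoms ρ π).add_mem ha.1 hb.1, fun v => U.add_mem (ha.2 v) (hb.2 v)⟩
  zero_mem' := ⟨(eqHoms ρ π).zero_mem, fun _ => U.zero_mem⟩
  smul_mem' := fun c f hf => ⟨(eqHoms ρ π).smul_mem c hf.1, fun v => U.smul_mem c (hf.2 v)⟩

lemma finrank_eqHomsInto (ρ : Representation ℂ G V) (π : Representation ℂ G W)
    (U : Submodule ℂ W) (hU : ∀ g, ∀ x ∈ U, π g x ∈ U) :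
    Module.finrank ℂ (eqHomsInto ρ π U) = multRep ρ (subRep π U hU) := by
  have E : (eqHomsInto ρ π U) ≃ₗ[ℂ] (eqHoms ρ (subRep π U hU)) :=
    { toFun := fun f => ⟨(f.1).codRestrict U f.2.2, mem_eqHoms.2 fun g v => by
        apply Subtype.ext
        rw [subRep_apply]
        simp only [LinearMap.codRestrict_apply]
        exact mem_eqHoms.1 f.2.1 g v⟩
      map_add' := fun f g => by
        apply Subtype.ext; ext v; simp
      map_smul' := fun c f => by
        apply Subtype.ext; ext v; simp
      invFun := fun f => ⟨U.subtype ∘ₗ f.1, ⟨mem_eqHoms.2 fun g v => by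
          simp only [LinearMap.comp_apply, Submodule.coe_subtype]
          rw [mem_eqHoms.1 f.2 g v, subRep_apply],
        fun v => (f.1 v).2⟩⟩
      left_inv := fun f => by
        apply Subtype.ext; ext v; rfl
      right_inv := fun f => by
        apply Subtype.ext; ext v; rfl }
  exact E.finrank_eq

lemma multRep_add_of_isCompl [Fintype G] (ρ : Representation ℂ G V) (π : Representation ℂ G W)
    {U U' : Submodule ℂ W} (hU : ∀ g, ∀ x ∈ U, π g x ∈ U) (hU' : ∀ g, ∀ x ∈ U', π g x ∈ U')
    (hc : IsCompl U U') [FiniteDimensional ℂ V] [FiniteDimensional ℂ W] :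
    multRep ρ π = multRep ρ (subRep π U hU) + multRep ρ (subRep π U' hU') := by
  set pU : W →ₗ[ℂ] U := U.linearProjOfIsCompl U' hc with hpU
  set pU' : W →ₗ[ℂ] U' := U'.linearProjOfIsCompl U hc.symm with hpU'
  have left' : ∀ (y : W), ∀ hy : y ∈ U, (pU y : W) = y := fun y hy =>
    congrArg Subtype.val (Submodule.linearProjOfIsCompl_apply_left hc ⟨y, hy⟩)
  have right' : ∀ (y : W), ∀ hy : y ∈ U', (pU' y : W) = y := fun y hy =>
    congrArg Subtype.val (Submodule.linearProjOfIsCompl_apply_left hc.symm ⟨y, hy⟩)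
  have hdec : ∀ x : W, (pU x : W) + (pU' x : W) = x := fun x =>
    Submodule.projection_add_projection_eq_self hc x
  have key1 : ∀ (g : G) (x : W), (pU (π g x) : W) = π g (pU x) := by
    intro g x
    conv_lhs => rw [← hdec x]
    rw [map_add, map_add, Submodule.coe_add,
      left' _ (hU g _ (pU x).2),
      show pU (π g (pU' x)) = 0 from
        Submodule.projectionOnto_apply_of_mem_right hc (hU' g _ (pU' x).2)]
    simp
  have key2 : ∀ (g : G) (x : W), (pU' (π g x) : W) = π g (pU' x) := by
    intro g x
    conv_lhs => rw [← hdec x]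
    rw [map_add, map_add, Submodule.coe_add,
      right' _ (hU' g _ (pU' x).2),
      show pU' (π g (pU x)) = 0 from
        Submodule.projectionOnto_apply_of_mem_right hc.symm (hU g _ (pU x).2)]
    simp
  have hsup : eqHomsInto ρ π U ⊔ eqHomsInto ρ π U' = eqHoms ρ π := by
    apply le_antisymm
    · exact sup_le (fun f hf => hf.1) (fun f hf => hf.1)
    · intro f hf
      refine Submodule.mem_sup.2
        ⟨U.subtype ∘ₗ pU ∘ₗ f, ⟨mem_eqHoms.2 fun g v => ?_, fun v => (pU (f v)).2⟩,
         U'.subtype ∘ₗ pU' ∘ₗ f, ⟨mem_eqHoms.2 fun g v => ?_, fun v => (pU' (f v)).2⟩, ?_⟩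
      · simp only [LinearMap.comp_apply, Submodule.coe_subtype]
        rw [mem_eqHoms.1 hf g v, key1]
      · simp only [LinearMap.comp_apply, Submodule.coe_subtype]
        rw [mem_eqHoms.1 hf g v, key2]
      · ext v
        exact hdec (f v)
  have hinf : eqHomsInto ρ π U ⊓ eqHomsInto ρ π U' = ⊥ := by
    rw [eq_bot_iff]
    intro f hf
    have : f = 0 := by
      ext v
      exact Submodule.disjoint_def.1 hc.disjoint (f v) (hf.1.2 v) (hf.2.2 v)
    simp [this]
  have := Submodule.finrank_sup_add_finrank_inf_eq (eqHomsInto ρ π U) (eqHomsInto ρ π U')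
  rw [hsup, hinf, finrank_bot, add_zero, finrank_eqHomsInto ρ π U hU,
    finrank_eqHomsInto ρ π U' hU'] at this
  rw [multRep, this]

end RepTheory2

section Schur

variable {G : Type*} [Group G]
variable {V W : Type*} [AddCommGroup V] [Module ℂ V] [AddCommGroup W] [Module ℂ W]

lemma multRep_eq_zero_of_not_iso (ρ : Representation ℂ G V) (π : Representation ℂ G W)
    (hρ : RepIsIrreducible ρ) (hπ : RepIsIrreducible π) (h : ¬ RepIso ρ π) :
    multRep ρ π = 0 := by
  have hbot : eqHoms ρ π = ⊥ := by
    rw [eq_bot_iff]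
    intro f hf
    rw [Submodule.mem_bot]
    by_contra hf0
    have hker : LinearMap.ker f = ⊥ := by
      rcases hρ.2 (LinearMap.ker f) (fun g x hx => by
          rw [LinearMap.mem_ker] at hx ⊢
          rw [mem_eqHoms.1 hf g x, hx, map_zero]) with h' | h'
      · exact h'
      · exact absurd (LinearMap.ker_eq_top.1 h') hf0
    have hrange : LinearMap.range f = ⊤ := by
      rcases hπ.2 (LinearMap.range f) (fun g y hy => by
          obtain ⟨x, rfl⟩ := hy
          exact ⟨ρ g x, mem_eqHoms.1 hf g x⟩) with h' | h'
      · exact absurd (LinearMap.range_eq_bot.1 h') hf0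
      · exact h'
    exact h ⟨LinearEquiv.ofBijective f
      ⟨LinearMap.ker_eq_bot.1 hker, LinearMap.range_eq_top.1 hrange⟩,
      fun g v => mem_eqHoms.1 hf g v⟩
  rw [multRep, hbot]
  exact finrank_bot ℂ _

lemma multRep_self (ρ : Representation ℂ G V) [FiniteDimensional ℂ V]
    (hρ : RepIsIrreducible ρ) : multRep ρ ρ = 1 := by
  haveI : Nontrivial V := hρ.1
  have hid : (LinearMap.id : V →ₗ[ℂ] V) ∈ eqHoms ρ ρ := mem_eqHoms.2 fun g v => rfl
  have hspan : eqHoms ρ ρ = ℂ ∙ (LinearMap.id : V →ₗ[ℂ] V) := by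
    apply le_antisymm
    · intro f hf
      obtain ⟨c, hc⟩ := Module.End.exists_eigenvalue (f : Module.End ℂ V)
      have hmem : f - c • LinearMap.id ∈ eqHoms ρ ρ :=
        (eqHoms ρ ρ).sub_mem hf ((eqHoms ρ ρ).smul_mem c hid)
      have hker : LinearMap.ker (f - c • LinearMap.id) = ⊤ := by
        rcases hρ.2 (LinearMap.ker (f - c • LinearMap.id)) (fun g x hx => by
            rw [LinearMap.mem_ker] at hx ⊢
            rw [mem_eqHoms.1 hmem g x, hx, map_zero]) with h' | h'
        · exfalso
          obtain ⟨x, hx⟩ := hc.exists_hasEigenvector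
          have hx1 : f x = c • x := Module.End.mem_eigenspace_iff.1 hx.1
          have : x ∈ LinearMap.ker (f - c • LinearMap.id) := by
            rw [LinearMap.mem_ker]
            simp [LinearMap.sub_apply, hx1]
          rw [h', Submodule.mem_bot] at this
          exact hx.2 this
        · exact h'
      have hf' : f = c • LinearMap.id := by
        have h0 : f - c • LinearMap.id = 0 := LinearMap.ker_eq_top.1 hker
        rwa [sub_eq_zero] at h0
      rw [hf']
      exact Submodule.smul_mem _ _ (Submodule.mem_span_singleton_self _)
    · rw [Submodule.span_singleton_le_iff_mem]
      exact hid
  rw [multRep, hspan]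
  refine finrank_span_singleton ?_
  intro h0
  obtain ⟨x, hx⟩ := exists_ne (0 : V)
  exact hx (by simpa using LinearMap.congr_fun h0 x)

end Schur

/-- The counting theorem: the dimension of a representation is the weighted sum of
multiplicities of the irreducibles. -/
theorem finrank_eq_sum_mult {G : Type} [Group G] [Fintype G]
    {ι : Type} [Fintype ι] {Vι : ι → Type}
    [∀ i, AddCommGroup (Vι i)] [∀ i, Module ℂ (Vι i)] [∀ i, FiniteDimensional ℂ (Vι i)]
    (S : ∀ i, Representation ℂ G (Vι i)) (hirr : ∀ i, RepIsIrreducible (S i))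
    (hcomplete : ∀ {V : Type} [AddCommGroup V] [Module ℂ V] [FiniteDimensional ℂ V]
      (ρ : Representation ℂ G V), RepIsIrreducible ρ → ∃! i : ι, RepIso ρ (S i)) :
    ∀ (n : ℕ) (W : Type) [AddCommGroup W] [Module ℂ W] [FiniteDimensional ℂ W]
      (π : Representation ℂ G W), Module.finrank ℂ W ≤ n →
      Module.finrank ℂ W = ∑ i, Module.finrank ℂ (Vι i) * multRep (S i) π := by
  intro n
  induction n with
  | zero =>
    intro W _ _ _ π hn
    haveI : Subsingleton W := Module.finrank_zero_iff.1 (Nat.le_zero.1 hn)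
    have hm : ∀ i, multRep (S i) π = 0 := fun i => multRep_zero_of_subsingleton _ _
    simp [hm, Nat.le_zero.1 hn]
  | succ n IH =>
    intro W _ _ _ π hn
    classical
    by_cases htriv : Subsingleton W
    · have hm : ∀ i, multRep (S i) π = 0 := fun i => multRep_zero_of_subsingleton _ _
      simp [hm, Module.finrank_zero_of_subsingleton]
    haveI hnt : Nontrivial W := not_subsingleton_iff_nontrivial.1 htriv
    by_cases hirrW : RepIsIrreducible π
    · obtain ⟨j, hj, hjuniq⟩ := hcomplete π hirrW
      have hmult : ∀ i, multRep (S i) π = if i = j then 1 else 0 := by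
        intro i
        by_cases hij : i = j
        · subst hij
          rw [multRep_congr_right (S i) hj, if_pos rfl]
          exact multRep_self (S i) (hirr i)
        · rw [multRep_congr_right (S i) hj, if_neg hij]
          refine multRep_eq_zero_of_not_iso _ _ (hirr i) (hirr j) fun hiso => ?_
          exact hij (hjuniq i (hj.trans hiso.symm))
      have hfr : Module.finrank ℂ W = Module.finrank ℂ (Vι j) := by
        obtain ⟨e, _⟩ := hj
        exact e.finrank_eq
      rw [hfr, Finset.sum_congr rfl (fun i _ => by rw [hmult i])]
      simp [Finset.sum_ite_eq']
    · have hex : ∃ U : Submodule ℂ W, (∀ g, ∀ x ∈ U, π g x ∈ U) ∧ U ≠ ⊥ ∧ U ≠ ⊤ := by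
        by_contra hno
        push_neg at hno
        exact hirrW ⟨hnt, fun U hU => or_iff_not_imp_left.2 fun hb => hno U hU hb⟩
      obtain ⟨U, hUinv, hUbot, hUtop⟩ := hex
      obtain ⟨U', hU'inv, hc⟩ := exists_invariant_isCompl π U hUinv
      have hU'top : U' ≠ ⊤ := by
        intro h
        rw [h] at hc
        exact hUbot (disjoint_top.1 hc.disjoint)
      have h1 : Module.finrank ℂ U ≤ n := by
        have := Submodule.finrank_lt (K := ℂ) (V := W) hUtop
        omega
      have h2 : Module.finrank ℂ U' ≤ n := by
        have := Submodule.finrank_lt (K := ℂ) (V := W) hU'top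
        omega
      have e1 := IH U (subRep π U hUinv) h1
      have e2 := IH U' (subRep π U' hU'inv) h2
      have hadd := Submodule.finrank_add_eq_of_isCompl hc
      calc Module.finrank ℂ W
          = Module.finrank ℂ U + Module.finrank ℂ U' := hadd.symm
        _ = ∑ i, Module.finrank ℂ (Vι i) * multRep (S i) (subRep π U hUinv) +
            ∑ i, Module.finrank ℂ (Vι i) * multRep (S i) (subRep π U' hU'inv) := by
            rw [e1, e2]
        _ = ∑ i, Module.finrank ℂ (Vι i) *
              (multRep (S i) (subRep π U hUinv) + multRep (S i) (subRep π U' hU'inv)) := by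
            rw [← Finset.sum_add_distrib]
            exact Finset.sum_congr rfl fun i _ => (mul_add _ _ _).symm
        _ = ∑ i, Module.finrank ℂ (Vι i) * multRep (S i) π :=
            Finset.sum_congr rfl fun i _ => by
              rw [← multRep_add_of_isCompl (S i) π hUinv hU'inv hc]

/-- if `S i` is a complete family of pairwise non-isomorphic irreducible
representations of the finite group `G`, `π k` a sequence of finite-dimensional
representations, `c ≥ 0`, `liminf ⟨S i, π k⟩/k ≥ c·dim(S i)` for each `i`, and
`dim(π k)/k → c·∑ᵢ dim(S i)²`, then `⟨S i, π k⟩/k → c·dim(S i)` for every `i`. -/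
theorem stmt_4 (G : Type) [Group G] [Fintype G]
    {ι : Type} [Fintype ι] {Vι : ι → Type}
    [∀ i, AddCommGroup (Vι i)] [∀ i, Module ℂ (Vι i)] [∀ i, FiniteDimensional ℂ (Vι i)]
    (S : ∀ i, Representation ℂ G (Vι i)) (hirr : ∀ i, RepIsIrreducible (S i))
    (hcomplete : ∀ {V : Type} [AddCommGroup V] [Module ℂ V] [FiniteDimensional ℂ V]
      (ρ : Representation ℂ G V), RepIsIrreducible ρ → ∃! i : ι, RepIso ρ (S i))
    {Wk : ℕ → Type} [∀ k, AddCommGroup (Wk k)] [∀ k, Module ℂ (Wk k)]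
    [∀ k, FiniteDimensional ℂ (Wk k)]
    (π : ∀ k, Representation ℂ G (Wk k)) (c : ℝ) (hc : 0 ≤ c)
    (h1 : ∀ i, c * (finrank ℂ (Vι i) : ℝ) ≤
      Filter.liminf (fun k : ℕ => (multRep (S i) (π k) : ℝ) / k) Filter.atTop)
    (h2 : Filter.Tendsto (fun k : ℕ => (finrank ℂ (Wk k) : ℝ) / k) Filter.atTop
      (nhds (c * ∑ i, ((finrank ℂ (Vι i) : ℝ)) ^ 2))) :
    ∀ i, Filter.Tendsto (fun k : ℕ => (multRep (S i) (π k) : ℝ) / k) Filter.atTop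
      (nhds (c * (finrank ℂ (Vι i) : ℝ))) := by
  intro i
  classical
  set d : ι → ℝ := fun j => (finrank ℂ (Vι j) : ℝ) with hd_def
  have hd : ∀ j, 1 ≤ d j := by
    intro j
    haveI : Nontrivial (Vι j) := (hirr j).1
    exact_mod_cast Nat.one_le_cast.2 Module.finrank_pos
  have hd0 : ∀ j, 0 ≤ d j := fun j => le_trans zero_le_one (hd j)
  have key : ∀ k, (finrank ℂ (Wk k) : ℝ) =
      ∑ j, d j * ((multRep (S j) (π k) : ℝ)) := by
    intro k
    have h := finrank_eq_sum_mult S hirr hcomplete (finrank ℂ (Wk k)) (Wk k) (π k) le_rfl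
    simp only [hd_def]
    exact_mod_cast h
  have hcob : ∀ j, Filter.IsBoundedUnder (· ≥ ·) Filter.atTop
      (fun k : ℕ => (multRep (S j) (π k) : ℝ) / k) := by
    intro j
    refine ⟨0, Filter.eventually_map.mpr (Filter.Eventually.of_forall fun k => ?_)⟩
    positivity
  rw [tendsto_order]
  constructor
  · intro a ha
    exact Filter.eventually_lt_of_lt_liminf (lt_of_lt_of_le ha (h1 i)) (hcob i)
  · intro a ha
    set T : ℝ := ∑ j, ((finrank ℂ (Vι j) : ℝ)) ^ 2 with hT_def
    have hT : T = ∑ j, d j ^ 2 := by rw [hT_def, hd_def]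
    set ε : ℝ := a - c * d i with hε_def
    have hεpos : 0 < ε := by simp only [hε_def]; linarith [ha]
    set D : ℝ := ∑ j, d j with hD_def
    have hD : 0 < 1 + D := by
      have : (0:ℝ) ≤ D := Finset.sum_nonneg fun j _ => hd0 j
      linarith
    set δ : ℝ := ε / (2 * (1 + D)) with hδ_def
    have hδpos : 0 < δ := by positivity
    have hδval : δ * (1 + D) = ε / 2 := by
      rw [hδ_def]
      field_simp
    have hup : ∀ᶠ k in Filter.atTop, (finrank ℂ (Wk k) : ℝ) / k < c * T + δ :=
      h2.eventually (gt_mem_nhds (by linarith))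
    have hlow : ∀ᶠ k in Filter.atTop, ∀ j,
        c * d j - δ < (multRep (S j) (π k) : ℝ) / k := by
      rw [Filter.eventually_all]
      intro j
      refine Filter.eventually_lt_of_lt_liminf (lt_of_lt_of_le ?_ (h1 j)) (hcob j)
      linarith [hδpos]
    filter_upwards [hup, hlow, Filter.eventually_ge_atTop 1] with k hk1 hk2 hk3
    have hkpos : (0:ℝ) < (k : ℝ) := by exact_mod_cast Nat.lt_of_lt_of_le Nat.zero_lt_one hk3
    set m : ι → ℝ := fun j => (multRep (S j) (π k) : ℝ) / k with hm_def
    have hsum : (finrank ℂ (Wk k) : ℝ) / k = ∑ j, d j * m j := by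
      rw [key k, Finset.sum_div]
      exact Finset.sum_congr rfl fun j _ => (mul_div_assoc _ _ _)
    have hsplit : ∑ j ∈ Finset.univ.erase i, d j * m j = (∑ j, d j * m j) - d i * m i :=
      Finset.sum_erase_eq_sub (Finset.mem_univ i)
    have hlb : ∑ j ∈ Finset.univ.erase i, d j * (c * d j - δ) ≤
        ∑ j ∈ Finset.univ.erase i, d j * m j :=
      Finset.sum_le_sum fun j _ => mul_le_mul_of_nonneg_left (le_of_lt (hk2 j)) (hd0 j)
    have hub : d i * m i < c * T + δ - ∑ j ∈ Finset.univ.erase i, d j * (c * d j - δ) := by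
      have h' : ∑ j, d j * m j < c * T + δ := by rw [← hsum]; exact hk1
      linarith [hsplit, hlb]
    have hA : ∑ j ∈ Finset.univ.erase i, d j * (c * d j - δ) =
        (c * T - c * d i ^ 2) - (δ * D - δ * d i) := by
      have e1 : ∀ j, d j * (c * d j - δ) = c * d j ^ 2 - δ * d j := fun j => by ring
      rw [Finset.sum_congr rfl fun j _ => e1 j, Finset.sum_sub_distrib,
        Finset.sum_erase_eq_sub (Finset.mem_univ i),
        Finset.sum_erase_eq_sub (Finset.mem_univ i), hT, Finset.mul_sum, hD_def,
        Finset.mul_sum]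
    have hub2 : d i * m i < c * d i ^ 2 + ε / 2 := by
      have hdi1 : d i ≤ D := by
        rw [hD_def]
        exact Finset.single_le_sum (fun j _ => hd0 j) (Finset.mem_univ i)
      have : δ * d i ≤ δ * D := mul_le_mul_of_nonneg_left hdi1 hδpos.le
      have hδD : δ + (δ * D - δ * d i) ≤ ε / 2 := by
        have hexp : δ * (1 + D) = δ + δ * D := by ring
        have h1' : δ * 1 ≤ δ * d i := mul_le_mul_of_nonneg_left (hd i) hδpos.le
        linarith [hδval]
      calc d i * m i < c * T + δ - ((c * T - c * d i ^ 2) - (δ * D - δ * d i)) := by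
            rw [← hA]; exact hub
        _ = c * d i ^ 2 + (δ + (δ * D - δ * d i)) := by ring
        _ ≤ c * d i ^ 2 + ε / 2 := by linarith
    have hdipos : 0 < d i := lt_of_lt_of_le zero_lt_one (hd i)
    by_contra hcon
    push_neg at hcon
    have hge : a ≤ m i := hcon
    have : d i * (c * d i + ε) ≤ d i * m i := by
      apply mul_le_mul_of_nonneg_left _ hdipos.le
      have : a = c * d i + ε := by rw [hε_def]; ring
      linarith
    nlinarith [mul_le_mul_of_nonneg_left (hd i) hεpos.le]
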